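/- Let (X, Σ) be a measurable space, H a real Hilbert space, F : X → H strongly measurable, and μ, ν probability measures on X with ∫ ‖F(x)‖ dμ(x) < ∞ and ∫ ‖F(x)‖ dν(x) < ∞; set k(x,y) := ⟨F(x), F(y)⟩_H. Let m, n ≥ 2, and let X₁,…,X_m, Y₁,…,Y_n be independent random elements of X, with each X_i distributed according to μ and each Y_j distributed according to ν. Then the estimator L := (1/(m(m−1))) Σ_{i≠j} k(X_i, X_j) − (2/(mn)) Σ_{i=1}^m Σ_{j=1}^n k(X_i, Y_j) + (1/(n(n−1))) Σ_{i≠j} k(Y_i, Y_j) is integrable and satisfies E[L] = ‖∫ F dμ − ∫ F dν‖_H². -/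

import Mathlib

open MeasureTheory ProbabilityTheory

lemma key_inner {X : Type*} [MeasurableSpace X]
    {H : Type*} [NormedAddCommGroup H] [InnerProductSpace ℝ H] [CompleteSpace H]
    (F : X → H) (hF : StronglyMeasurable F)
    {Ω : Type*} [MeasurableSpace Ω] (P : Measure Ω) [IsProbabilityMeasure P]
    (μ ν : Measure X) [IsProbabilityMeasure μ] [IsProbabilityMeasure ν]
    (hμ : Integrable (fun x => ‖F x‖) μ) (hν : Integrable (fun x => ‖F x‖) ν)
    (U V : Ω → X) (hU : Measurable U) (hV : Measurable V)
    (hUlaw : P.map U = μ) (hVlaw : P.map V = ν)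
    (hUV : IndepFun U V P) :
    Integrable (fun ω => (inner ℝ (F (U ω)) (F (V ω)) : ℝ)) P ∧
    ∫ ω, (inner ℝ (F (U ω)) (F (V ω)) : ℝ) ∂P =
      (inner ℝ (∫ x, F x ∂μ) (∫ x, F x ∂ν) : ℝ) := by
  have hFμ : Integrable F μ := (integrable_norm_iff hF.aestronglyMeasurable).1 hμ
  have hFν : Integrable F ν := (integrable_norm_iff hF.aestronglyMeasurable).1 hν
  set g : X × X → ℝ := fun p => (inner ℝ (F p.1) (F p.2) : ℝ) with hg
  have hgsm : StronglyMeasurable g :=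
    (hF.comp_measurable measurable_fst).inner (hF.comp_measurable measurable_snd)
  have hmap : P.map (fun ω => (U ω, V ω)) = μ.prod ν := by
    rw [← hUlaw, ← hVlaw]
    exact (indepFun_iff_map_prod_eq_prod_map_map hU.aemeasurable hV.aemeasurable).1 hUV
  have hgint : Integrable g (μ.prod ν) := by
    have hb : Integrable (fun p : X × X => ‖F p.1‖ * ‖F p.2‖) (μ.prod ν) := hμ.mul_prod hν
    refine hb.mono' hgsm.aestronglyMeasurable (Filter.Eventually.of_forall fun p => ?_)
    simpa using norm_inner_le_norm (𝕜 := ℝ) (F p.1) (F p.2)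
  have hcomp : Integrable (fun ω => g (U ω, V ω)) P := by
    rw [← hmap] at hgint
    exact (integrable_map_measure hgsm.aestronglyMeasurable
      (hU.prodMk hV).aemeasurable).1 hgint
  refine ⟨hcomp, ?_⟩
  have hI : ∫ ω, g (U ω, V ω) ∂P = ∫ p, g p ∂(μ.prod ν) := by
    rw [← hmap, integral_map (hU.prodMk hV).aemeasurable hgsm.aestronglyMeasurable]
  calc ∫ ω, (inner ℝ (F (U ω)) (F (V ω)) : ℝ) ∂P
      = ∫ p, g p ∂(μ.prod ν) := hI
    _ = ∫ x, ∫ y, (inner ℝ (F x) (F y) : ℝ) ∂ν ∂μ := integral_prod g hgint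
    _ = ∫ x, (inner ℝ (F x) (∫ y, F y ∂ν) : ℝ) ∂μ := by
        refine integral_congr_ae (Filter.Eventually.of_forall fun x => ?_)
        exact integral_inner hFν (F x)
    _ = (inner ℝ (∫ x, F x ∂μ) (∫ x, F x ∂ν) : ℝ) := by
        have h : ∀ x, (inner ℝ (F x) (∫ y, F y ∂ν) : ℝ) = inner ℝ (∫ y, F y ∂ν) (F x) :=
          fun x => real_inner_comm _ _
        simp_rw [h]
        rw [integral_inner hFμ]
        exact real_inner_comm _ _


lemma sum_ite_ne_const (m : ℕ) (c : ℝ) :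
    ∑ i : Fin m, ∑ j : Fin m, (if i ≠ j then c else 0) = ((m : ℝ) * ((m : ℝ) - 1)) * c := by
  have h : ∀ i : Fin m, ∑ j : Fin m, (if i ≠ j then c else 0) = (m : ℝ) * c - c := by
    intro i
    have h2 : ∀ j : Fin m, (if i ≠ j then c else 0) = c - (if i = j then c else 0) := by
      intro j; by_cases h : i = j <;> simp [h]
    simp_rw [h2, Finset.sum_sub_distrib, Finset.sum_const, Finset.sum_ite_eq]
    simp [mul_comm]
  simp_rw [h, Finset.sum_const]
  simp
  ring
theorem mmd_estimator_unbiased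
    {X : Type*} [MeasurableSpace X]
    {H : Type*} [NormedAddCommGroup H] [InnerProductSpace ℝ H] [CompleteSpace H]
    (F : X → H) (hF : StronglyMeasurable F)
    (μ ν : Measure X) [IsProbabilityMeasure μ] [IsProbabilityMeasure ν]
    (hμ : Integrable (fun x => ‖F x‖) μ) (hν : Integrable (fun x => ‖F x‖) ν)
    (m n : ℕ) (hm : 2 ≤ m) (hn : 2 ≤ n)
    {Ω : Type*} [MeasurableSpace Ω] (P : Measure Ω) [IsProbabilityMeasure P]
    (Xs : Fin m → Ω → X) (Ys : Fin n → Ω → X)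
    (hXmeas : ∀ i, Measurable (Xs i)) (hYmeas : ∀ j, Measurable (Ys j))
    (hindep : iIndepFun (m := fun _ : Fin m ⊕ Fin n => (inferInstance : MeasurableSpace X))
      (Sum.elim Xs Ys) P)
    (hXlaw : ∀ i, P.map (Xs i) = μ) (hYlaw : ∀ j, P.map (Ys j) = ν)
    (L : Ω → ℝ)
    (hL : ∀ ω, L ω =
      (1 / ((m : ℝ) * ((m : ℝ) - 1))) *
        (∑ i : Fin m, ∑ j : Fin m,
          if i ≠ j then (inner ℝ (F (Xs i ω)) (F (Xs j ω)) : ℝ) else 0)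
      - (2 / ((m : ℝ) * (n : ℝ))) *
        (∑ i : Fin m, ∑ j : Fin n, (inner ℝ (F (Xs i ω)) (F (Ys j ω)) : ℝ))
      + (1 / ((n : ℝ) * ((n : ℝ) - 1))) *
        (∑ i : Fin n, ∑ j : Fin n,
          if i ≠ j then (inner ℝ (F (Ys i ω)) (F (Ys j ω)) : ℝ) else 0)) :
    Integrable L P ∧
    ∫ ω, L ω ∂P = ‖(∫ x, F x ∂μ) - ∫ x, F x ∂ν‖ ^ 2 := by
  classical
  set a := ∫ x, F x ∂μ with ha
  set b := ∫ x, F x ∂ν with hb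
  -- per-pair facts
  have hXX : ∀ i j : Fin m, i ≠ j →
      Integrable (fun ω => (inner ℝ (F (Xs i ω)) (F (Xs j ω)) : ℝ)) P ∧
      ∫ ω, (inner ℝ (F (Xs i ω)) (F (Xs j ω)) : ℝ) ∂P = (inner ℝ a a : ℝ) := by
    intro i j hij
    exact key_inner F hF P μ μ hμ hμ _ _ (hXmeas i) (hXmeas j) (hXlaw i) (hXlaw j)
      (hindep.indepFun (show (Sum.inl i : Fin m ⊕ Fin n) ≠ Sum.inl j by simpa using hij))
  have hXY : ∀ (i : Fin m) (j : Fin n),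
      Integrable (fun ω => (inner ℝ (F (Xs i ω)) (F (Ys j ω)) : ℝ)) P ∧
      ∫ ω, (inner ℝ (F (Xs i ω)) (F (Ys j ω)) : ℝ) ∂P = (inner ℝ a b : ℝ) := by
    intro i j
    exact key_inner F hF P μ ν hμ hν _ _ (hXmeas i) (hYmeas j) (hXlaw i) (hYlaw j)
      (hindep.indepFun (show (Sum.inl i : Fin m ⊕ Fin n) ≠ Sum.inr j by simp))
  have hYY : ∀ i j : Fin n, i ≠ j →
      Integrable (fun ω => (inner ℝ (F (Ys i ω)) (F (Ys j ω)) : ℝ)) P ∧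
      ∫ ω, (inner ℝ (F (Ys i ω)) (F (Ys j ω)) : ℝ) ∂P = (inner ℝ b b : ℝ) := by
    intro i j hij
    exact key_inner F hF P ν ν hν hν _ _ (hYmeas i) (hYmeas j) (hYlaw i) (hYlaw j)
      (hindep.indepFun (show (Sum.inr i : Fin m ⊕ Fin n) ≠ Sum.inr j by simpa using hij))
  -- integrability of the three double sums
  have hI1 : Integrable (fun ω => ∑ i : Fin m, ∑ j : Fin m,
      if i ≠ j then (inner ℝ (F (Xs i ω)) (F (Xs j ω)) : ℝ) else 0) P := by
    refine integrable_finset_sum _ fun i _ => integrable_finset_sum _ fun j _ => ?_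
    by_cases h : i = j
    · simp [h]
    · simpa [h] using (hXX i j h).1
  have hI2 : Integrable (fun ω => ∑ i : Fin m, ∑ j : Fin n,
      (inner ℝ (F (Xs i ω)) (F (Ys j ω)) : ℝ)) P :=
    integrable_finset_sum _ fun i _ => integrable_finset_sum _ fun j _ => (hXY i j).1
  have hI3 : Integrable (fun ω => ∑ i : Fin n, ∑ j : Fin n,
      if i ≠ j then (inner ℝ (F (Ys i ω)) (F (Ys j ω)) : ℝ) else 0) P := by
    refine integrable_finset_sum _ fun i _ => integrable_finset_sum _ fun j _ => ?_
    by_cases h : i = j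
    · simp [h]
    · simpa [h] using (hYY i j h).1
  have hLeq : L = fun ω =>
      (1 / ((m : ℝ) * ((m : ℝ) - 1))) *
        (∑ i : Fin m, ∑ j : Fin m,
          if i ≠ j then (inner ℝ (F (Xs i ω)) (F (Xs j ω)) : ℝ) else 0)
      - (2 / ((m : ℝ) * (n : ℝ))) *
        (∑ i : Fin m, ∑ j : Fin n, (inner ℝ (F (Xs i ω)) (F (Ys j ω)) : ℝ))
      + (1 / ((n : ℝ) * ((n : ℝ) - 1))) *
        (∑ i : Fin n, ∑ j : Fin n,
          if i ≠ j then (inner ℝ (F (Ys i ω)) (F (Ys j ω)) : ℝ) else 0) := funext hL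
  have hLint : Integrable L P := by
    rw [hLeq]
    exact ((hI1.const_mul _).sub (hI2.const_mul _)).add (hI3.const_mul _)
  refine ⟨hLint, ?_⟩
  -- integrals of the double sums
  have hE1 : ∫ ω, (∑ i : Fin m, ∑ j : Fin m,
      if i ≠ j then (inner ℝ (F (Xs i ω)) (F (Xs j ω)) : ℝ) else 0) ∂P
      = ((m : ℝ) * ((m : ℝ) - 1)) * (inner ℝ a a : ℝ) := by
    rw [integral_finset_sum _ (fun i _ => integrable_finset_sum _ fun j _ => by
        by_cases h : i = j
        · simp [h]
        · simpa [h] using (hXX i j h).1)]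
    · have : ∀ i : Fin m, ∫ ω, (∑ j : Fin m,
          if i ≠ j then (inner ℝ (F (Xs i ω)) (F (Xs j ω)) : ℝ) else 0) ∂P
          = ∑ j : Fin m, if i ≠ j then (inner ℝ a a : ℝ) else 0 := by
        intro i
        rw [integral_finset_sum _ (fun j _ => ?_)]
        · refine Finset.sum_congr rfl fun j _ => ?_
          by_cases h : i = j
          · simp [h]
          · simpa [h] using (hXX i j h).2
        · by_cases h : i = j
          · simp [h]
          · simpa [h] using (hXX i j h).1
      simp_rw [this]
      exact sum_ite_ne_const m _
  have hE2 : ∫ ω, (∑ i : Fin m, ∑ j : Fin n,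
      (inner ℝ (F (Xs i ω)) (F (Ys j ω)) : ℝ)) ∂P
      = ((m : ℝ) * (n : ℝ)) * (inner ℝ a b : ℝ) := by
    rw [integral_finset_sum _ (fun i _ => integrable_finset_sum _ fun j _ => (hXY i j).1)]
    have : ∀ i : Fin m, ∫ ω, (∑ j : Fin n,
        (inner ℝ (F (Xs i ω)) (F (Ys j ω)) : ℝ)) ∂P = (n : ℝ) * (inner ℝ a b : ℝ) := by
      intro i
      rw [integral_finset_sum _ (fun j _ => (hXY i j).1)]
      simp_rw [fun j => (hXY i j).2]
      simp [Finset.sum_const, mul_comm]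
    simp_rw [this, Finset.sum_const]
    simp
    ring
  have hE3 : ∫ ω, (∑ i : Fin n, ∑ j : Fin n,
      if i ≠ j then (inner ℝ (F (Ys i ω)) (F (Ys j ω)) : ℝ) else 0) ∂P
      = ((n : ℝ) * ((n : ℝ) - 1)) * (inner ℝ b b : ℝ) := by
    rw [integral_finset_sum _ (fun i _ => integrable_finset_sum _ fun j _ => by
        by_cases h : i = j
        · simp [h]
        · simpa [h] using (hYY i j h).1)]
    · have : ∀ i : Fin n, ∫ ω, (∑ j : Fin n,
          if i ≠ j then (inner ℝ (F (Ys i ω)) (F (Ys j ω)) : ℝ) else 0) ∂P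
          = ∑ j : Fin n, if i ≠ j then (inner ℝ b b : ℝ) else 0 := by
        intro i
        rw [integral_finset_sum _ (fun j _ => ?_)]
        · refine Finset.sum_congr rfl fun j _ => ?_
          by_cases h : i = j
          · simp [h]
          · simpa [h] using (hYY i j h).2
        · by_cases h : i = j
          · simp [h]
          · simpa [h] using (hYY i j h).1
      simp_rw [this]
      exact sum_ite_ne_const n _
  have hval : ∫ ω, L ω ∂P
      = (1 / ((m : ℝ) * ((m : ℝ) - 1))) * (((m : ℝ) * ((m : ℝ) - 1)) * (inner ℝ a a : ℝ))
      - (2 / ((m : ℝ) * (n : ℝ))) * (((m : ℝ) * (n : ℝ)) * (inner ℝ a b : ℝ))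
      + (1 / ((n : ℝ) * ((n : ℝ) - 1))) * (((n : ℝ) * ((n : ℝ) - 1)) * (inner ℝ b b : ℝ)) := by
    have h12 : Integrable (fun ω =>
        (1 / ((m : ℝ) * ((m : ℝ) - 1))) *
          (∑ i : Fin m, ∑ j : Fin m,
            if i ≠ j then (inner ℝ (F (Xs i ω)) (F (Xs j ω)) : ℝ) else 0)
        - (2 / ((m : ℝ) * (n : ℝ))) *
          (∑ i : Fin m, ∑ j : Fin n, (inner ℝ (F (Xs i ω)) (F (Ys j ω)) : ℝ))) P :=
      (hI1.const_mul _).sub (hI2.const_mul _)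
    rw [integral_congr_ae (Filter.Eventually.of_forall hL)]
    rw [integral_add h12 (hI3.const_mul _),
        integral_sub (hI1.const_mul _) (hI2.const_mul _),
        integral_const_mul, integral_const_mul, integral_const_mul, hE1, hE2, hE3]
  rw [hval]
  have hm0 : (m : ℝ) * ((m : ℝ) - 1) ≠ 0 := by
    have : (2 : ℝ) ≤ (m : ℝ) := by exact_mod_cast hm
    nlinarith
  have hn0 : (n : ℝ) * ((n : ℝ) - 1) ≠ 0 := by
    have : (2 : ℝ) ≤ (n : ℝ) := by exact_mod_cast hn
    nlinarith
  have hmn0 : (m : ℝ) * (n : ℝ) ≠ 0 := by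
    have h1 : (2 : ℝ) ≤ (m : ℝ) := by exact_mod_cast hm
    have h2 : (2 : ℝ) ≤ (n : ℝ) := by exact_mod_cast hn
    nlinarith
  have hnorm : ‖a - b‖ ^ 2 = ‖a‖ ^ 2 - 2 * (inner ℝ a b : ℝ) + ‖b‖ ^ 2 := by
    rw [@norm_sub_sq_real]
  rw [hnorm, ← real_inner_self_eq_norm_sq a, ← real_inner_self_eq_norm_sq b]
  have hm1 : (m : ℝ) - 1 ≠ 0 := by
    have : (2 : ℝ) ≤ (m : ℝ) := by exact_mod_cast hm
    linarith
  have hn1 : (n : ℝ) - 1 ≠ 0 := by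
    have : (2 : ℝ) ≤ (n : ℝ) := by exact_mod_cast hn
    linarith
  field_simp
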